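/- arXiv:2403.14631 — 2 statements merged into one kernel-verified Lean document; each statement's English description precedes it below -/
import Mathlib

section
/- Let C > 0 and let φ : ℝ → ℂ be a measurable function satisfying ‖φ(t)‖ ≤ C·|t|^{1/2} for all t ≠ 0. Then for every real Y > 0, the function t ↦ φ(t)·(sin(πYt)/(πYt))² is integrable on ℝ and ‖(1/π)·∫_{−∞}^{∞} φ(t)·(sin(πYt)/(πYt))² dt‖ ≤ (2C/π²)·Y^{−3/2}. -/
open MeasureTheory Real

open Set Filter


lemma alg (s v : ℝ) (hs : s^2 = 2) (hp : 0 < v^2 + s*v + 1) (hm : 0 < v^2 - s*v + 1) :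
    s/8 * ((2*v + s)/(v^2 + s*v + 1) - (2*v - s)/(v^2 - s*v + 1))
    + s/4 * (s/(1 + (s*v + 1)^2) + s/(1 + (s*v - 1)^2)) = (1 + v^4)⁻¹ := by
  have e1 : 1 + (s*v + 1)^2 = 2*(v^2 + s*v + 1) := by linear_combination (v^2) * hs
  have e2 : 1 + (s*v - 1)^2 = 2*(v^2 - s*v + 1) := by linear_combination (v^2) * hs
  have hd : (v^2 + s*v + 1)*(v^2 - s*v + 1) = 1 + v^4 := by linear_combination (-(v^2)) * hs
  rw [e1, e2, ← hd]
  have hA : v*(v+s)+1 ≠ 0 := by rw [show v*(v+s)+1 = v^2+s*v+1 by ring]; exact hp.ne'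
  have hB : v*(v-s)+1 ≠ 0 := by rw [show v*(v-s)+1 = v^2-s*v+1 by ring]; exact hm.ne'
  field_simp
  linear_combination 32 * hs

noncomputable def Fq (v : ℝ) : ℝ :=
  (Real.sqrt 2/8) * (Real.log (v^2 + Real.sqrt 2*v + 1) - Real.log (v^2 - Real.sqrt 2*v + 1))
  + (Real.sqrt 2/4) * (Real.arctan (Real.sqrt 2*v + 1) + Real.arctan (Real.sqrt 2*v - 1))

lemma quad_pos (v : ℝ) : 0 < v^2 + Real.sqrt 2*v + 1 ∧ 0 < v^2 - Real.sqrt 2*v + 1 := by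
  have h2 : (Real.sqrt 2)^2 = 2 := Real.sq_sqrt (by norm_num)
  constructor <;> nlinarith [sq_nonneg (v + Real.sqrt 2/2), sq_nonneg (v - Real.sqrt 2/2)]

lemma Fq_deriv (v : ℝ) : HasDerivAt Fq ((1 + v^4)⁻¹) v := by
  have h2 : (Real.sqrt 2)^2 = 2 := Real.sq_sqrt (by norm_num)
  obtain ⟨hp, hm⟩ := quad_pos v
  have d1 : HasDerivAt (fun v : ℝ => Real.log (v^2 + Real.sqrt 2*v + 1))
      ((2*v + Real.sqrt 2) / (v^2 + Real.sqrt 2*v + 1)) v := by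
    have : HasDerivAt (fun v : ℝ => v^2 + Real.sqrt 2*v + 1) (2*v + Real.sqrt 2) v := by
      simpa using (((hasDerivAt_pow 2 v).add ((hasDerivAt_id v).const_mul (Real.sqrt 2))).add_const 1)
    exact this.log hp.ne'
  have d2 : HasDerivAt (fun v : ℝ => Real.log (v^2 - Real.sqrt 2*v + 1))
      ((2*v - Real.sqrt 2) / (v^2 - Real.sqrt 2*v + 1)) v := by
    have : HasDerivAt (fun v : ℝ => v^2 - Real.sqrt 2*v + 1) (2*v - Real.sqrt 2) v := by
      simpa using (((hasDerivAt_pow 2 v).sub ((hasDerivAt_id v).const_mul (Real.sqrt 2))).add_const 1)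
    exact this.log hm.ne'
  have d3 : HasDerivAt (fun v : ℝ => Real.arctan (Real.sqrt 2*v + 1))
      (Real.sqrt 2 / (1 + (Real.sqrt 2*v + 1)^2)) v := by
    have h : HasDerivAt (fun v : ℝ => Real.sqrt 2*v + 1) (Real.sqrt 2) v := by
      simpa using ((hasDerivAt_id v).const_mul (Real.sqrt 2)).add_const 1
    simpa [div_eq_mul_inv, mul_comm, Function.comp_def] using (Real.hasDerivAt_arctan _).comp v h
  have d4 : HasDerivAt (fun v : ℝ => Real.arctan (Real.sqrt 2*v - 1))
      (Real.sqrt 2 / (1 + (Real.sqrt 2*v - 1)^2)) v := by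
    have h : HasDerivAt (fun v : ℝ => Real.sqrt 2*v - 1) (Real.sqrt 2) v := by
      simpa using ((hasDerivAt_id v).const_mul (Real.sqrt 2)).sub_const 1
    simpa [div_eq_mul_inv, mul_comm, Function.comp_def] using (Real.hasDerivAt_arctan _).comp v h
  have := (((d1.sub d2).const_mul (Real.sqrt 2/8)).add ((d3.add d4).const_mul (Real.sqrt 2/4)))
  rw [← alg (Real.sqrt 2) v h2 hp hm]
  exact this

lemma integrable_quartic : IntegrableOn (fun v : ℝ => (1 + v^4)⁻¹) (Ioi 0) := by
  refine (Integrable.mono' (integrable_inv_one_add_sq.const_mul 2) ?_ ?_).integrableOn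
  · exact (Continuous.inv₀ (by continuity) (fun v => by positivity)).aestronglyMeasurable
  · refine Eventually.of_forall (fun v => ?_)
    rw [Real.norm_eq_abs, abs_of_nonneg (by positivity),
      show (2:ℝ)*(1+v^2)⁻¹ = ((1+v^2)/2)⁻¹ by field_simp]
    exact inv_anti₀ (by positivity) (by nlinarith [sq_nonneg (v^2 - 1)])

lemma Fq_lim : Tendsto Fq atTop (nhds (π * Real.sqrt 2 / 4)) := by
  have h2 : (Real.sqrt 2)^2 = 2 := Real.sq_sqrt (by norm_num)
  have hs : 0 < Real.sqrt 2 := by positivity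
  have hlog : Tendsto (fun v : ℝ => Real.log (v^2 + Real.sqrt 2*v + 1) -
      Real.log (v^2 - Real.sqrt 2*v + 1)) atTop (nhds 0) := by
    have heq : ∀ᶠ v in atTop, Real.log (v^2 + Real.sqrt 2*v + 1) -
        Real.log (v^2 - Real.sqrt 2*v + 1)
        = Real.log ((1 + Real.sqrt 2/v + 1/v^2) / (1 - Real.sqrt 2/v + 1/v^2)) := by
      filter_upwards [eventually_gt_atTop (0:ℝ)] with v hv
      obtain ⟨hp, hm⟩ := quad_pos v
      have hAeq : (1 + Real.sqrt 2/v + 1/v^2) = (v^2 + Real.sqrt 2*v + 1)/v^2 := by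
        field_simp
      have hBeq : (1 - Real.sqrt 2/v + 1/v^2) = (v^2 - Real.sqrt 2*v + 1)/v^2 := by
        field_simp
      rw [← Real.log_div hp.ne' hm.ne', hAeq, hBeq,
        div_div_div_cancel_right₀ (by positivity : (v:ℝ)^2 ≠ 0)]
    rw [tendsto_congr' heq]
    have h1 : Tendsto (fun v : ℝ => (1 + Real.sqrt 2/v + 1/v^2) / (1 - Real.sqrt 2/v + 1/v^2))
        atTop (nhds 1) := by
      have ha : Tendsto (fun v : ℝ => 1 + Real.sqrt 2/v + 1/v^2) atTop (nhds 1) := by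
        have := ((tendsto_const_nhds (x := (1:ℝ))).add
          ((tendsto_inv_atTop_zero.const_mul (Real.sqrt 2)))).add
          ((tendsto_inv_atTop_zero.pow 2))
        simpa [div_eq_mul_inv, inv_pow, one_mul] using this
      have hb : Tendsto (fun v : ℝ => 1 - Real.sqrt 2/v + 1/v^2) atTop (nhds 1) := by
        have := ((tendsto_const_nhds (x := (1:ℝ))).sub
          ((tendsto_inv_atTop_zero.const_mul (Real.sqrt 2)))).add
          ((tendsto_inv_atTop_zero.pow 2))
        simpa [div_eq_mul_inv, inv_pow, one_mul] using this
      have h := ha.div hb (by norm_num)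
      rw [div_one] at h
      exact h
    have := (Real.continuousAt_log (by norm_num : (1:ℝ) ≠ 0)).tendsto.comp h1
    simpa [Function.comp_def] using this
  have harc1 : Tendsto (fun v : ℝ => Real.arctan (Real.sqrt 2*v + 1)) atTop (nhds (π/2)) := by
    refine (tendsto_nhds_of_tendsto_nhdsWithin tendsto_arctan_atTop).comp ?_
    exact tendsto_atTop_add_const_right _ 1 (Tendsto.const_mul_atTop hs tendsto_id)
  have harc2 : Tendsto (fun v : ℝ => Real.arctan (Real.sqrt 2*v - 1)) atTop (nhds (π/2)) := by
    refine (tendsto_nhds_of_tendsto_nhdsWithin tendsto_arctan_atTop).comp ?_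
    exact tendsto_atTop_add_const_right _ (-1) (Tendsto.const_mul_atTop hs tendsto_id)
  have := (hlog.const_mul (Real.sqrt 2/8)).add ((harc1.add harc2).const_mul (Real.sqrt 2/4))
  convert this using 1
  · rfl
  · congr 1; ring

lemma int_quartic : ∫ v in Ioi (0:ℝ), (1 + v^4)⁻¹ = π * Real.sqrt 2 / 4 := by
  have := integral_Ioi_of_hasDerivAt_of_tendsto' (f := Fq) (f' := fun v => (1 + v^4)⁻¹)
    (a := 0) (fun x _ => Fq_deriv x) integrable_quartic Fq_lim
  rw [this]
  have : Fq 0 = 0 := by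
    simp [Fq, Real.arctan_neg, Real.arctan_one]
  rw [this, sub_zero]

lemma gaussian_moment {u : ℝ} (hu : 0 < u) :
    ∫ v in Ioi (0:ℝ), v^2 * Real.exp (-(u*v^2)) = Real.sqrt π / 4 * u ^ (-(3:ℝ)/2) := by
  have h32 : (0:ℝ) < 3/2 := by norm_num
  have hG : ∫ t in Ioi (0:ℝ), t ^ ((3:ℝ)/2 - 1) * Real.exp (-(u*t))
      = (1/u) ^ ((3:ℝ)/2) * Real.Gamma (3/2) := Real.integral_rpow_mul_exp_neg_mul_Ioi h32 hu
  have hsub := integral_comp_rpow_Ioi_of_pos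
    (g := fun t => t ^ ((3:ℝ)/2 - 1) * Real.exp (-(u*t))) (p := 2) (by norm_num)
  rw [← hsub] at hG
  have heq : ∀ v ∈ Ioi (0:ℝ),
      ((2:ℝ) * v ^ ((2:ℝ) - 1)) • ((v ^ (2:ℝ)) ^ ((3:ℝ)/2 - 1) * Real.exp (-(u * v ^ (2:ℝ))))
      = 2 * (v^2 * Real.exp (-(u*v^2))) := by
    intro v hv
    have hv0 : (0:ℝ) < v := hv
    rw [smul_eq_mul, ← Real.rpow_natCast v 2]
    rw [← Real.rpow_mul hv0.le]
    norm_num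
    ring
  rw [setIntegral_congr_fun measurableSet_Ioi heq] at hG
  rw [integral_const_mul] at hG
  have hGam : Real.Gamma (3/2) = Real.sqrt π / 2 := by
    rw [show (3/2 : ℝ) = 1/2 + 1 by norm_num, Real.Gamma_add_one (by norm_num),
      Real.Gamma_one_half_eq]
    ring
  have : ∫ v in Ioi (0:ℝ), v^2 * Real.exp (-(u*v^2))
      = ((1/u) ^ ((3:ℝ)/2) * Real.Gamma (3/2)) / 2 := by
    rw [← hG]; ring
  rw [this, hGam, one_div, Real.inv_rpow hu.le, ← Real.rpow_neg hu.le]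
  ring_nf

lemma integrable_exp_neg_mul {b : ℝ} (hb : 0 < b) :
    IntegrableOn (fun u : ℝ => Real.exp (-(b*u))) (Ioi 0) := by
  simpa [neg_mul] using exp_neg_integrableOn_Ioi 0 hb

lemma integrable_cos_exp {b : ℝ} (hb : 0 < b) :
    IntegrableOn (fun u : ℝ => Real.cos u * Real.exp (-(b*u))) (Ioi 0) := by
  refine Integrable.mono' (integrable_exp_neg_mul hb) ?_ ?_
  · exact (Continuous.aestronglyMeasurable (by continuity)).restrict
  · refine Eventually.of_forall (fun u => ?_)
    rw [Real.norm_eq_abs, abs_mul, Real.abs_exp]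
    nlinarith [Real.abs_cos_le_one u, Real.exp_pos (-(b*u)), abs_nonneg (Real.cos u)]

lemma integrable_one_sub_cos_exp {b : ℝ} (hb : 0 < b) :
    IntegrableOn (fun u : ℝ => (1 - Real.cos u) * Real.exp (-(b*u))) (Ioi 0) := by
  have := ((integrable_exp_neg_mul hb).sub (integrable_cos_exp hb))
  refine this.congr (Eventually.of_forall fun u => ?_)
  simp only [Pi.sub_apply]
  ring

lemma integral_exp_neg_mul {b : ℝ} (hb : 0 < b) :
    ∫ u in Ioi (0:ℝ), Real.exp (-(b*u)) = 1/b := by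
  have := integral_comp_mul_left_Ioi (fun x : ℝ => Real.exp (-x)) 0 hb
  simp only [mul_zero] at this
  rw [this, integral_exp_neg_Ioi]
  simp [one_div]

lemma laplace_cos {b : ℝ} (hb : 0 < b) :
    ∫ u in Ioi (0:ℝ), Real.cos u * Real.exp (-(b*u)) = b/(1+b^2) := by
  set G : ℝ → ℝ := fun u => Real.exp (-(b*u)) * (Real.sin u - b * Real.cos u) / (1+b^2) with hGdef
  have hb2 : (0:ℝ) < 1 + b^2 := by positivity
  have hderiv : ∀ u : ℝ, HasDerivAt G (Real.cos u * Real.exp (-(b*u))) u := by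
    intro u
    have h1 : HasDerivAt (fun u : ℝ => Real.exp (-(b*u))) (-b * Real.exp (-(b*u))) u := by
      have : HasDerivAt (fun u : ℝ => -(b*u)) (-b) u := by
        exact (((hasDerivAt_id' u).const_mul b).neg).congr_deriv (by ring)
      simpa [mul_comm] using this.exp
    have h2 : HasDerivAt (fun u : ℝ => Real.sin u - b * Real.cos u)
        (Real.cos u + b * Real.sin u) u := by
      exact ((Real.hasDerivAt_sin u).sub ((Real.hasDerivAt_cos u).const_mul b)).congr_deriv (by ring)
    have := ((h1.mul h2).div_const (1+b^2))
    refine this.congr_deriv ?_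
    field_simp
    ring
  have hlim : Tendsto G atTop (nhds 0) := by
    have he : Tendsto (fun u : ℝ => Real.exp (-(b*u)) * ((1+b)/(1+b^2))) atTop (nhds 0) := by
      have he0 : Tendsto (fun u : ℝ => Real.exp (-(b*u))) atTop (nhds 0) := by
        simpa [neg_mul] using Real.tendsto_exp_comp_nhds_zero.mpr
          (Tendsto.const_mul_atTop_of_neg (neg_neg_iff_pos.mpr hb) tendsto_id)
      simpa using he0.mul_const ((1+b)/(1+b^2))
    refine squeeze_zero_norm (fun u => ?_) he
    rw [hGdef]
    have h1 : |Real.sin u - b * Real.cos u| ≤ 1 + b := by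
      have habs := abs_sub (Real.sin u) (b * Real.cos u)
      rw [abs_mul, abs_of_pos hb] at habs
      nlinarith [Real.abs_sin_le_one u, Real.abs_cos_le_one u, abs_nonneg (Real.cos u)]
    simp only [Real.norm_eq_abs, abs_div, abs_mul, Real.abs_exp, abs_of_pos hb2]
    rw [div_le_iff₀ hb2, mul_comm (Real.exp _) ((1+b)/(1+b^2)), mul_comm]
    rw [div_mul_eq_mul_div, div_mul_eq_mul_div, le_div_iff₀ hb2]
    have hep := Real.exp_pos (-(b*u))
    nlinarith [mul_le_mul_of_nonneg_right h1 (le_of_lt (mul_pos hep hb2))]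
  have := integral_Ioi_of_hasDerivAt_of_tendsto' (f := G)
    (f' := fun u => Real.cos u * Real.exp (-(b*u))) (a := 0)
    (fun x _ => hderiv x) (integrable_cos_exp hb) hlim
  rw [this, hGdef]
  simp
  ring

lemma laplace_one_sub_cos {b : ℝ} (hb : 0 < b) :
    ∫ u in Ioi (0:ℝ), (1 - Real.cos u) * Real.exp (-(b*u)) = 1/(b*(1+b^2)) := by
  have hsplit : ∀ u : ℝ, (1 - Real.cos u) * Real.exp (-(b*u))
      = Real.exp (-(b*u)) - Real.cos u * Real.exp (-(b*u)) := fun u => by ring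
  rw [setIntegral_congr_fun measurableSet_Ioi (fun u _ => hsplit u),
    integral_sub (integrable_exp_neg_mul hb) (integrable_cos_exp hb),
    integral_exp_neg_mul hb, laplace_cos hb]
  have hb2 : (0:ℝ) < 1 + b^2 := by positivity
  field_simp
  ring

lemma integrableOn_kernel {f : ℝ → ℝ} (hf : Continuous f) {c : ℝ} (hc : 0 < c)
    (h1 : ∀ u, |f u| ≤ c * u^2) (h2 : ∀ u, |f u| ≤ c) :
    IntegrableOn (fun u => f u * u ^ (-(3:ℝ)/2)) (Ioi 0) := by
  have hcont : ContinuousOn (fun u : ℝ => f u * u ^ (-(3:ℝ)/2)) (Ioi 0) :=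
    hf.continuousOn.mul (fun x hx =>
      (Real.continuousAt_rpow_const x _ (Or.inl (ne_of_gt hx))).continuousWithinAt)
  have hIoc : IntegrableOn (fun u => f u * u ^ (-(3:ℝ)/2)) (Ioc 0 1) := by
    refine Integrable.mono' (g := fun _ => c)
      (integrableOn_const (C := c) measure_Ioc_lt_top.ne)
      ((hcont.mono Ioc_subset_Ioi_self).aestronglyMeasurable measurableSet_Ioc) ?_
    rw [ae_restrict_iff' measurableSet_Ioc]
    refine Eventually.of_forall (fun u hu => ?_)
    obtain ⟨hu0, hu1⟩ := hu
    rw [Real.norm_eq_abs, abs_mul, abs_of_nonneg (Real.rpow_nonneg hu0.le _)]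
    calc |f u| * u ^ (-(3:ℝ)/2) ≤ (c * u^2) * u ^ (-(3:ℝ)/2) :=
          mul_le_mul_of_nonneg_right (h1 u) (Real.rpow_nonneg hu0.le _)
      _ = c * u ^ ((1:ℝ)/2) := by
          rw [mul_assoc]
          congr 1
          rw [← Real.rpow_natCast u 2, ← Real.rpow_add hu0]
          norm_num
      _ ≤ c * 1 := mul_le_mul_of_nonneg_left
            (Real.rpow_le_one hu0.le hu1 (by norm_num)) hc.le
      _ = c := mul_one c
  have hIoi : IntegrableOn (fun u => f u * u ^ (-(3:ℝ)/2)) (Ioi 1) := by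
    refine Integrable.mono'
      ((integrableOn_Ioi_rpow_of_lt (a := -(3:ℝ)/2) (by norm_num) one_pos).const_mul c)
      ((hcont.mono (Ioi_subset_Ioi zero_le_one)).aestronglyMeasurable measurableSet_Ioi) ?_
    rw [ae_restrict_iff' measurableSet_Ioi]
    refine Eventually.of_forall (fun u hu => ?_)
    have hu0 : (0:ℝ) < u := lt_trans one_pos hu
    rw [Real.norm_eq_abs, abs_mul, abs_of_nonneg (Real.rpow_nonneg hu0.le _)]
    exact mul_le_mul_of_nonneg_right (h2 u) (Real.rpow_nonneg hu0.le _)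
  have := hIoc.union hIoi
  rwa [Ioc_union_Ioi_eq_Ioi zero_le_one] at this

lemma one_sub_cos_nonneg (u : ℝ) : 0 ≤ 1 - Real.cos u := by
  nlinarith [Real.cos_le_one u]

lemma one_sub_cos_le_sq (u : ℝ) : 1 - Real.cos u ≤ u^2 / 2 := by
  have h := Real.sin_sq_eq_half_sub (u/2)
  rw [show 2*(u/2) = u by ring] at h
  nlinarith [Real.sin_sq_le_sq (x := u/2)]

lemma one_sub_cos_le_two (u : ℝ) : 1 - Real.cos u ≤ 2 := by
  nlinarith [Real.neg_one_le_cos u]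

lemma integrableOn_cos_kernel :
    IntegrableOn (fun u : ℝ => (1 - Real.cos u) * u ^ (-(3:ℝ)/2)) (Ioi 0) := by
  refine integrableOn_kernel (by continuity) (c := 2) two_pos (fun u => ?_) (fun u => ?_)
  · rw [abs_of_nonneg (one_sub_cos_nonneg u)]
    nlinarith [one_sub_cos_le_sq u, sq_nonneg u]
  · rw [abs_of_nonneg (one_sub_cos_nonneg u)]
    exact one_sub_cos_le_two u

lemma integrableOn_gaussian_sq {u : ℝ} (hu : 0 < u) :
    IntegrableOn (fun v : ℝ => v^2 * Real.exp (-(u*v^2))) (Ioi 0) := by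
  have h := integrableOn_rpow_mul_exp_neg_mul_sq hu (s := 2) (by norm_num)
  refine h.congr_fun (fun x hx => ?_) measurableSet_Ioi
  simp only [neg_mul, Real.rpow_two]

lemma K_eval : ∫ u in Ioi (0:ℝ), (1 - Real.cos u) * u ^ (-(3:ℝ)/2) = Real.sqrt (2*π) := by
  have hFnn : ∀ u v : ℝ, 0 ≤ (1 - Real.cos u) * (v^2 * Real.exp (-(u*v^2))) :=
    fun u v => mul_nonneg (one_sub_cos_nonneg u) (by positivity)
  have hFcont : Continuous (fun p : ℝ × ℝ =>
      (1 - Real.cos p.1) * (p.2^2 * Real.exp (-(p.1*p.2^2)))) :=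
    (continuous_const.sub (Real.continuous_cos.comp continuous_fst)).mul
      ((continuous_snd.pow 2).mul
        (Real.continuous_exp.comp (continuous_fst.mul (continuous_snd.pow 2)).neg))
  have hsecint : ∀ u ∈ Ioi (0:ℝ), (∫ v in Ioi (0:ℝ), (1 - Real.cos u) * (v^2 * Real.exp (-(u*v^2))))
      = Real.sqrt π / 4 * ((1 - Real.cos u) * u ^ (-(3:ℝ)/2)) := by
    intro u hu
    rw [integral_const_mul, gaussian_moment hu]
    ring
  have hInt : Integrable (Function.uncurry (fun u v : ℝ =>
      (1 - Real.cos u) * (v^2 * Real.exp (-(u*v^2)))))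
      ((volume.restrict (Ioi 0)).prod (volume.restrict (Ioi 0))) := by
    refine (integrable_prod_iff hFcont.aestronglyMeasurable).mpr ⟨?_, ?_⟩
    · filter_upwards [ae_restrict_mem measurableSet_Ioi] with u hu
      exact (integrableOn_gaussian_sq hu).const_mul _
    · refine Integrable.congr (integrableOn_cos_kernel.const_mul (Real.sqrt π / 4)) ?_
      filter_upwards [ae_restrict_mem measurableSet_Ioi] with u hu
      simp only [Function.uncurry, Real.norm_eq_abs, abs_of_nonneg (hFnn u _)]
      exact (hsecint u hu).symm
  have hswap := integral_integral_swap hInt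
  have hL : (∫ u in Ioi (0:ℝ), ∫ v in Ioi (0:ℝ), (1 - Real.cos u) * (v^2 * Real.exp (-(u*v^2))))
      = Real.sqrt π / 4 * ∫ u in Ioi (0:ℝ), (1 - Real.cos u) * u ^ (-(3:ℝ)/2) := by
    rw [← integral_const_mul]
    exact setIntegral_congr_fun measurableSet_Ioi (fun u hu => hsecint u hu)
  have hR : (∫ v in Ioi (0:ℝ), ∫ u in Ioi (0:ℝ), (1 - Real.cos u) * (v^2 * Real.exp (-(u*v^2))))
      = π * Real.sqrt 2 / 4 := by
    rw [← int_quartic]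
    refine setIntegral_congr_fun measurableSet_Ioi (fun v hv => ?_)
    have hv0 : (0:ℝ) < v := hv
    have hv2 : (0:ℝ) < v^2 := by positivity
    have heq : ∀ u : ℝ, (1 - Real.cos u) * (v^2 * Real.exp (-(u*v^2)))
        = v^2 * ((1 - Real.cos u) * Real.exp (-(v^2*u))) := by
      intro u; rw [mul_comm u (v^2)]; ring
    simp_rw [heq]
    rw [integral_const_mul, laplace_one_sub_cos hv2]
    rw [show (1:ℝ) + (v^2)^2 = 1 + v^4 by ring]
    field_simp
  rw [hL, hR] at hswap
  have hπ : (0:ℝ) < Real.sqrt π := Real.sqrt_pos.mpr pi_pos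
  have hkey : Real.sqrt (2*π) * Real.sqrt π = π * Real.sqrt 2 := by
    rw [← Real.sqrt_mul (by positivity), show 2*π*π = π^2*2 by ring,
      Real.sqrt_mul (by positivity), Real.sqrt_sq pi_pos.le]
  have : Real.sqrt π / 4 * Real.sqrt (2*π) = π * Real.sqrt 2 / 4 := by
    rw [div_mul_eq_mul_div, mul_comm (Real.sqrt π) (Real.sqrt (2*π)), hkey]
  have h4 := hswap.trans this.symm
  have := mul_left_cancel₀ (by positivity : (Real.sqrt π / 4 : ℝ) ≠ 0) h4
  exact this
lemma sinsq_kernel_eval {a : ℝ} (ha : 0 < a) :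
    ∫ t in Ioi (0:ℝ), Real.sin (a*t)^2 * t ^ (-(3:ℝ)/2) = Real.sqrt (π*a) := by
  have hc : (0:ℝ) < 2*a := by positivity
  have h3 : (2*a:ℝ) ^ ((3:ℝ)/2) * (2*a) ^ (-(3:ℝ)/2) = 1 := by
    rw [← Real.rpow_add hc]; norm_num
  have heq : ∀ t ∈ Ioi (0:ℝ), Real.sin (a*t)^2 * t ^ (-(3:ℝ)/2)
      = (1/2) * (2*a) ^ ((3:ℝ)/2) * ((1 - Real.cos ((2*a)*t)) * ((2*a)*t) ^ (-(3:ℝ)/2)) := by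
    intro t ht
    have ht0 : (0:ℝ) < t := ht
    have h1 : ((2*a)*t : ℝ) ^ (-(3:ℝ)/2) = (2*a) ^ (-(3:ℝ)/2) * t ^ (-(3:ℝ)/2) :=
      Real.mul_rpow hc.le ht0.le
    have h2 : Real.sin (a*t)^2 = 1/2 - Real.cos ((2*a)*t)/2 := by
      rw [Real.sin_sq_eq_half_sub, show 2*(a*t) = (2*a)*t by ring]
    rw [h2, h1]
    linear_combination (-(1/2) * (1 - Real.cos ((2*a)*t)) * t ^ (-(3:ℝ)/2)) * h3
  rw [setIntegral_congr_fun measurableSet_Ioi heq, integral_const_mul]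
  have hcv := integral_comp_mul_left_Ioi
    (fun x : ℝ => (1 - Real.cos x) * x ^ (-(3:ℝ)/2)) 0 hc
  simp only [mul_zero] at hcv
  rw [hcv, K_eval, smul_eq_mul]
  have h1 : (2*a:ℝ) ^ ((3:ℝ)/2) * (2*a)⁻¹ = (2*a) ^ ((1:ℝ)/2) := by
    rw [← Real.rpow_neg_one (2*a), ← Real.rpow_add hc]; norm_num
  have h4 : Real.sqrt (2*a) * Real.sqrt (2*π) = 2 * Real.sqrt (π*a) := by
    rw [← Real.sqrt_mul (by positivity), show (2*a)*(2*π) = 2^2*(π*a) by ring,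
      Real.sqrt_mul (by positivity), Real.sqrt_sq (by norm_num)]
  calc (1/2) * (2*a) ^ ((3:ℝ)/2) * ((2*a)⁻¹ * Real.sqrt (2*π))
      = (1/2) * (((2*a) ^ ((3:ℝ)/2) * (2*a)⁻¹) * Real.sqrt (2*π)) := by ring
    _ = (1/2) * (Real.sqrt (2*a) * Real.sqrt (2*π)) := by
        rw [h1, ← Real.sqrt_eq_rpow]
    _ = Real.sqrt (π*a) := by rw [h4]; ring

lemma sinsq_abs_integrableOn_Ioi {a : ℝ} (ha : 0 < a) :
    IntegrableOn (fun t : ℝ => Real.sin (a*t)^2 * |t| ^ (-(3:ℝ)/2)) (Ioi 0) := by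
  have hb1 : ∀ u : ℝ, |Real.sin (a*u)^2| ≤ (a^2+1) * u^2 := by
    intro u
    rw [abs_of_nonneg (sq_nonneg _)]
    nlinarith [Real.sin_sq_le_sq (x := a*u), sq_nonneg u, sq_nonneg (a*u)]
  have hb2 : ∀ u : ℝ, |Real.sin (a*u)^2| ≤ a^2+1 := by
    intro u
    rw [abs_of_nonneg (sq_nonneg _)]
    nlinarith [Real.sin_sq_le_one (a*u), sq_nonneg a]
  have h := integrableOn_kernel (f := fun t => Real.sin (a*t)^2)
    (by continuity) (c := a^2+1) (by positivity) hb1 hb2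
  refine h.congr_fun (fun t ht => ?_) measurableSet_Ioi
  rw [abs_of_pos (show (0:ℝ) < t from ht)]

lemma sinsq_abs_integrable {a : ℝ} (ha : 0 < a) :
    Integrable (fun t : ℝ => Real.sin (a*t)^2 * |t| ^ (-(3:ℝ)/2)) := by
  have hIoi := sinsq_abs_integrableOn_Ioi ha
  have hIic : IntegrableOn (fun t : ℝ => Real.sin (a*t)^2 * |t| ^ (-(3:ℝ)/2)) (Iic 0) := by
    rw [IntegrableOn, ← Measure.map_neg_eq_self (volume : Measure ℝ)]
    have m : MeasurableEmbedding fun x : ℝ => -x := (Homeomorph.neg ℝ).measurableEmbedding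
    rw [Measure.restrict_map m.measurable measurableSet_Iic, m.integrable_map_iff]
    simp_rw [Function.comp_def, mul_neg, Real.sin_neg, neg_sq, abs_neg, neg_preimage,
      neg_Iic, neg_zero]
    exact Iff.mpr integrableOn_Ici_iff_integrableOn_Ioi hIoi
  have := hIic.union hIoi
  rwa [Iic_union_Ioi, integrableOn_univ] at this

lemma sinsq_abs_integral {a : ℝ} (ha : 0 < a) :
    ∫ t : ℝ, Real.sin (a*t)^2 * |t| ^ (-(3:ℝ)/2) = 2 * Real.sqrt (π*a) := by
  have heven : ∀ x : ℝ, Real.sin (a*|x|)^2 * |x| ^ (-(3:ℝ)/2)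
      = Real.sin (a*x)^2 * |x| ^ (-(3:ℝ)/2) := by
    intro x
    rcases abs_choice x with h|h <;> rw [h]
    rw [mul_neg, Real.sin_neg, neg_sq]
  have h := integral_comp_abs (f := fun y => Real.sin (a*y)^2 * y ^ (-(3:ℝ)/2))
  rw [sinsq_kernel_eval ha] at h
  rw [← h]
  refine integral_congr_ae (Eventually.of_forall (fun x => ?_))
  exact (heven x).symm

/-- The squared sinc kernel `(sin(πYt)/(πYt))²`, extended by the value `1` at `t = 0`. -/
noncomputable def sincSq (Y t : ℝ) : ℝ :=
  if t = 0 then 1 else (Real.sin (π * Y * t) / (π * Y * t)) ^ 2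

/-- Let `C > 0` and let `φ : ℝ → ℂ` be a measurable function satisfying
`‖φ(t)‖ ≤ C·|t|^{1/2}` for all `t ≠ 0`. Then for every real `Y > 0`, the function
`t ↦ φ(t)·(sin(πYt)/(πYt))²` is integrable on `ℝ` and
`‖(1/π)·∫ φ(t)·(sin(πYt)/(πYt))² dt‖ ≤ (2C/π²)·Y^{−3/2}`. -/
theorem archimedean_integral_bound (C : ℝ) (hC : 0 < C) (φ : ℝ → ℂ)
    (hφ : Measurable φ) (hbound : ∀ t : ℝ, t ≠ 0 → ‖φ t‖ ≤ C * |t| ^ ((1 : ℝ) / 2))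
    (Y : ℝ) (hY : 0 < Y) :
    Integrable (fun t : ℝ => φ t * (sincSq Y t : ℂ)) ∧
    ‖(1 / (π : ℂ)) * ∫ t : ℝ, φ t * (sincSq Y t : ℂ)‖
      ≤ (2 * C / π ^ 2) * Y ^ (-(3 : ℝ) / 2) := by
  have hπ := Real.pi_pos
  have ha : (0:ℝ) < π*Y := by positivity
  have hMint : Integrable (fun t : ℝ =>
      (C/(π^2*Y^2)) * (Real.sin (π*Y*t)^2 * |t| ^ (-(3:ℝ)/2))) :=
    (sinsq_abs_integrable ha).const_mul _
  have hMeval : (∫ t : ℝ, (C/(π^2*Y^2)) * (Real.sin (π*Y*t)^2 * |t| ^ (-(3:ℝ)/2)))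
      = (C/(π^2*Y^2)) * (2*(π * Real.sqrt Y)) := by
    rw [integral_const_mul, sinsq_abs_integral ha]
    congr 2
    rw [show π*(π*Y) = π^2*Y by ring, Real.sqrt_mul (by positivity) Y,
      Real.sqrt_sq hπ.le]
  have hsincMeas : Measurable (sincSq Y) := by
    unfold sincSq
    refine Measurable.ite ?_ measurable_const ?_
    · simpa [Set.setOf_eq_eq_singleton] using measurableSet_singleton (0:ℝ)
    · exact ((Real.measurable_sin.comp (measurable_id.const_mul (π*Y))).div
        (measurable_id.const_mul (π*Y))).pow_const 2
  have hgmeas : AEStronglyMeasurable (fun t : ℝ => φ t * (sincSq Y t : ℂ)) volume :=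
    (hφ.mul (Complex.measurable_ofReal.comp hsincMeas)).aestronglyMeasurable
  have h0 : ∀ᵐ t : ℝ, t ≠ 0 := by
    exact compl_mem_ae_iff.mpr (measure_singleton (0:ℝ))
  have hsinc_nonneg : ∀ t : ℝ, 0 ≤ sincSq Y t := by
    intro t
    unfold sincSq
    split
    · norm_num
    · positivity
  have key : ∀ t : ℝ, t ≠ 0 → C * |t| ^ ((1:ℝ)/2) * sincSq Y t
      = (C/(π^2*Y^2)) * (Real.sin (π*Y*t)^2 * |t| ^ (-(3:ℝ)/2)) := by
    intro t ht
    have ht0 : (0:ℝ) < |t| := abs_pos.mpr ht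
    have habs : |t| ^ ((1:ℝ)/2) * (t^2)⁻¹ = |t| ^ (-(3:ℝ)/2) := by
      rw [show (t:ℝ)^2 = |t|^(2:ℕ) by rw [sq_abs], ← Real.rpow_natCast |t| 2,
        ← Real.rpow_neg (abs_nonneg t), ← Real.rpow_add ht0]
      norm_num
    unfold sincSq
    rw [if_neg ht, ← habs, div_pow, show ((π*Y*t):ℝ)^2 = (π^2*Y^2) * t^2 by ring]
    have ht2 : (t:ℝ)^2 ≠ 0 := pow_ne_zero 2 ht
    field_simp
  have hbnd : ∀ᵐ t : ℝ, ‖φ t * (sincSq Y t : ℂ)‖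
      ≤ (C/(π^2*Y^2)) * (Real.sin (π*Y*t)^2 * |t| ^ (-(3:ℝ)/2)) := by
    filter_upwards [h0] with t ht
    rw [norm_mul, Complex.norm_real, Real.norm_eq_abs, abs_of_nonneg (hsinc_nonneg t)]
    calc ‖φ t‖ * sincSq Y t ≤ (C * |t| ^ ((1:ℝ)/2)) * sincSq Y t :=
          mul_le_mul_of_nonneg_right (hbound t ht) (hsinc_nonneg t)
      _ = _ := key t ht
  have hgint : Integrable (fun t : ℝ => φ t * (sincSq Y t : ℂ)) :=
    Integrable.mono' hMint hgmeas hbnd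
  refine ⟨hgint, ?_⟩
  have hnorm : ‖∫ t : ℝ, φ t * (sincSq Y t : ℂ)‖
      ≤ ∫ t : ℝ, (C/(π^2*Y^2)) * (Real.sin (π*Y*t)^2 * |t| ^ (-(3:ℝ)/2)) :=
    le_trans (norm_integral_le_integral_norm _)
      (integral_mono_ae hgint.norm hMint hbnd)
  rw [norm_mul]
  have h1π : ‖(1/(π:ℂ))‖ = 1/π := by
    rw [norm_div, norm_one, Complex.norm_real, Real.norm_eq_abs, abs_of_pos hπ]
  rw [h1π]
  have hYr : Y ^ (-(3:ℝ)/2) = Real.sqrt Y / Y^2 := by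
    rw [show (-(3:ℝ)/2) = (1:ℝ)/2 + (-2:ℝ) by norm_num, Real.rpow_add hY,
      show ((-2:ℝ)) = ((-2 : ℤ):ℝ) by norm_num, Real.rpow_intCast, ← Real.sqrt_eq_rpow]
    rw [zpow_neg, div_eq_mul_inv]
    norm_num
  have final : (1/π) * ((C/(π^2*Y^2)) * (2*(π * Real.sqrt Y)))
      = (2*C/π^2) * Y ^ (-(3:ℝ)/2) := by
    rw [hYr]
    field_simp
  calc (1/π) * ‖∫ t : ℝ, φ t * (sincSq Y t : ℂ)‖
      ≤ (1/π) * ∫ t : ℝ, (C/(π^2*Y^2)) * (Real.sin (π*Y*t)^2 * |t| ^ (-(3:ℝ)/2)) :=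
        mul_le_mul_of_nonneg_left hnorm (by positivity)
    _ = (2*C/π^2) * Y ^ (-(3:ℝ)/2) := by rw [hMeval, final]
end

section
/- Under the independence and variance hypotheses on (a_p), there exist constants d₁, d₂ > 0 and X₀ such that for every real X ≥ X₀, the random variable (1/log X)·∑_{X < p ≤ X²} a_p·(log p)/p has variance between d₁ and d₂. -/
open MeasureTheory ProbabilityTheory Finset

open scoped Classical in
/-- The finite set of primes `p` with `X < p ≤ Y` (for real `X, Y`). -/
noncomputable def primesIn (X Y : ℝ) : Finset ℕ :=
  (Finset.range (⌊Y⌋₊ + 1)).filter fun p => p.Prime ∧ X < (p : ℝ) ∧ (p : ℝ) ≤ Y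

section MertensHelpers
open Finset ArithmeticFunction
lemma geom_half (x : ℝ) (hx : 0 ≤ x) (h : x ≤ 1/2) (n : ℕ) : ∑ j ∈ range n, x^j ≤ 2 := by
  calc ∑ j ∈ range n, x^j ≤ ∑ j ∈ range n, (1/2:ℝ)^j := by
        apply Finset.sum_le_sum; intro i _; exact pow_le_pow_left₀ hx h i
    _ ≤ 2 := by
        rw [geom_sum_eq (by norm_num)]
        have h0 : (0:ℝ) ≤ (1/2:ℝ)^n := by positivity
        have : ((1/2:ℝ)^n - 1)/(1/2 - 1) = 2 - 2*(1/2:ℝ)^n := by ring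
        linarith
lemma tele (n : ℕ) (hn : 1 ≤ n) :
    ∑ m ∈ Icc 2 n, (1:ℝ)/(m * Real.sqrt m) ≤ 2 - 2/Real.sqrt n := by
  induction n with
  | zero => omega
  | succ n ih =>
    rcases Nat.lt_or_ge n 1 with h1 | h1
    · interval_cases n
      · simp
    · have hstep := Finset.sum_Icc_succ_top (a := 2) (b := n) (by omega)
        (fun m => (1:ℝ)/(m * Real.sqrt m))
      rw [hstep]
      have ihh := ih h1
      have hu : (1:ℝ) ≤ Real.sqrt n := by
        rw [show (1:ℝ) = Real.sqrt 1 by simp]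
        exact Real.sqrt_le_sqrt (by exact_mod_cast h1)
      set u := Real.sqrt n with hu'
      set v := Real.sqrt ((n:ℝ)+1) with hv'
      have huv : u ≤ v := Real.sqrt_le_sqrt (by push_cast; linarith)
      have hu2 : u^2 = n := Real.sq_sqrt (by positivity)
      have hv2 : v^2 = (n:ℝ)+1 := Real.sq_sqrt (by positivity)
      have hvpos : (0:ℝ) < v := by linarith
      have key : 1/(((n:ℝ)+1) * v) ≤ 2/u - 2/v := by
        rw [div_sub_div _ _ (by linarith) (by linarith)]
        rw [div_le_div_iff₀ (by positivity) (by positivity)]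
        nlinarith [sq_nonneg (v-u), mul_pos hvpos hvpos, mul_le_mul_of_nonneg_right huv (le_of_lt hvpos)]
      
      push_cast
      rw [← hv']
      linarith

lemma log_le_two_sqrt {x : ℝ} (hx : 1 ≤ x) : Real.log x ≤ 2 * Real.sqrt x := by
  have h1 : Real.log (Real.sqrt x) ≤ Real.sqrt x - 1 :=
    Real.log_le_sub_one_of_pos (Real.sqrt_pos.2 (by linarith))
  have h2 : Real.log (Real.sqrt x) = Real.log x / 2 := Real.log_sqrt (by linarith)
  have h3 : (0:ℝ) ≤ Real.sqrt x := Real.sqrt_nonneg x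
  linarith

lemma R_bound (n : ℕ) : ∑ d ∈ (Ioc 0 n).filter (fun d => ¬ d.Prime), Λ d / d ≤ 8 := by
  classical
  set T : Finset (ℕ × ℕ) :=
    ((Icc 2 n) ×ˢ (Icc 2 n)).filter (fun q => q.1.Prime ∧ q.1 ^ q.2 ≤ n) with hT
  have hsub : ∑ d ∈ (Ioc 0 n).filter (fun d => ¬ d.Prime), Λ d / d
      ≤ ∑ d ∈ T.image (fun q => q.1 ^ q.2), Λ d / d := by
    rw [← Finset.sum_filter_of_ne (p := fun d => d ∈ T.image (fun q : ℕ × ℕ => q.1 ^ q.2))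
      (by
        intro d hd hne
        simp only [mem_filter, mem_Ioc] at hd
        have hΛ : Λ d ≠ 0 := fun h => hne (by simp [h])
        obtain ⟨p, k, hp, hk, hpk⟩ := (ArithmeticFunction.vonMangoldt_ne_zero_iff.mp hΛ)
        have hp' : p.Prime := Nat.prime_iff.mpr hp
        have hk2 : 2 ≤ k := by
          by_contra hlt
          have hk1 : k = 1 := by omega
          rw [hk1, pow_one] at hpk
          exact hd.2 (hpk ▸ hp')
        have hdn : d ≤ n := hd.1.2
        have hpn : p ≤ n := le_trans (Nat.le_self_pow (by omega) p) (hpk ▸ hdn)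
        have hkn : k ≤ n := by
          have h2k : 2^k ≤ n := le_trans (Nat.pow_le_pow_left hp'.two_le k) (hpk ▸ hdn)
          have := @Nat.lt_two_pow_self k
          omega
        apply Finset.mem_image.mpr
        exact ⟨(p, k), by
          simp only [hT, mem_filter, mem_product, mem_Icc]
          exact ⟨⟨⟨hp'.two_le, hpn⟩, ⟨hk2, hkn⟩⟩, hp', hpk ▸ hdn⟩, hpk⟩)]
    apply Finset.sum_le_sum_of_subset_of_nonneg
    · intro x hx; exact (mem_filter.mp hx).2
    · intro d _ _
      exact div_nonneg ArithmeticFunction.vonMangoldt_nonneg (Nat.cast_nonneg d)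
  have hinj : Set.InjOn (fun q : ℕ × ℕ => q.1 ^ q.2) T := by
    intro q1 h1 q2 h2 heq
    simp only [hT, coe_filter, Set.mem_setOf_eq, mem_product, mem_Icc] at h1 h2
    obtain ⟨⟨⟨hp1, _⟩, hk1, _⟩, hpr1, _⟩ := h1
    obtain ⟨⟨⟨hp2, _⟩, hk2, _⟩, hpr2, _⟩ := h2
    simp only at heq
    have hpp : q1.1 = q2.1 := by
      have hdvd : q1.1 ∣ q2.1 ^ q2.2 := heq ▸ dvd_pow_self q1.1 (by omega)
      exact (Nat.prime_dvd_prime_iff_eq hpr1 hpr2).mp (hpr1.dvd_of_dvd_pow hdvd)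
    have : q1.2 = q2.2 := Nat.pow_right_injective hpr1.two_le (by rw [hpp] at heq ⊢; exact heq)
    exact Prod.ext hpp this
  rw [Finset.sum_image (fun x hx y hy h => hinj hx hy h)] at hsub
  have hstep2 : ∑ q ∈ T, Λ (q.1 ^ q.2) / (q.1 ^ q.2 : ℕ)
      ≤ ∑ q ∈ (Icc 2 n) ×ˢ (Icc 2 n), Real.log q.1 / (q.1:ℝ) ^ q.2 := by
    have : ∀ q ∈ T, Λ (q.1 ^ q.2) / ((q.1 ^ q.2 : ℕ) : ℝ) = Real.log q.1 / (q.1:ℝ) ^ q.2 := by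
      intro q hq
      simp only [hT, mem_filter, mem_product, mem_Icc] at hq
      obtain ⟨⟨⟨_, _⟩, hk2, _⟩, hpr, _⟩ := hq
      rw [ArithmeticFunction.vonMangoldt_apply_pow (by omega),
        ArithmeticFunction.vonMangoldt_apply_prime hpr]
      push_cast
      ring
    rw [Finset.sum_congr rfl this]
    apply Finset.sum_le_sum_of_subset_of_nonneg (Finset.filter_subset _ _)
    intro q hq _
    simp only [mem_product, mem_Icc] at hq
    have : (1:ℝ) ≤ q.1 := by exact_mod_cast le_trans (by norm_num) hq.1.1
    positivity
  have hstep3 : ∑ q ∈ (Icc 2 n) ×ˢ (Icc 2 n), Real.log q.1 / (q.1:ℝ) ^ q.2 ≤ 8 := by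
    rw [Finset.sum_product]
    rcases Nat.lt_or_ge n 2 with h | h
    · rw [show Icc 2 n = ∅ from Finset.Icc_eq_empty (by omega)]; simp
    calc ∑ p ∈ Icc 2 n, ∑ k ∈ Icc 2 n, Real.log p / (p:ℝ)^k
        ≤ ∑ p ∈ Icc 2 n, 4 / ((p:ℝ) * Real.sqrt p) := by
          apply Finset.sum_le_sum
          intro p hp
          simp only [mem_Icc] at hp
          have hp1 : (2:ℝ) ≤ (p:ℝ) := by exact_mod_cast hp.1
          have hlogp : 0 ≤ Real.log p := Real.log_nonneg (by linarith)
          have inner : ∑ k ∈ Icc 2 n, Real.log p / (p:ℝ)^k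
              ≤ Real.log p * (2 / (p:ℝ)^2) := by
            have hre : ∀ k ∈ Icc 2 n, Real.log p / (p:ℝ)^k
                = Real.log p * ((1/(p:ℝ)^2) * (1/(p:ℝ))^(k-2)) := by
              intro k hk
              simp only [mem_Icc] at hk
              have hkk : k - 2 + 2 = k := by omega
              have hsplit : (p:ℝ)^k = (p:ℝ)^2 * (p:ℝ)^(k-2) := by
                rw [← pow_add]; rw [add_comm]; rw [hkk]
              have hppos : (0:ℝ) < (p:ℝ) := by linarith
              rw [hsplit, div_pow, one_pow]
              field_simp
            calc ∑ k ∈ Icc 2 n, Real.log p / (p:ℝ)^k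
                = ∑ k ∈ Icc 2 n, Real.log p * ((1/(p:ℝ)^2) * (1/(p:ℝ))^(k-2)) :=
                  Finset.sum_congr rfl hre
              _ = Real.log p * (1/(p:ℝ)^2) * ∑ k ∈ Icc 2 n, (1/(p:ℝ))^(k-2) := by
                  rw [Finset.mul_sum]; apply Finset.sum_congr rfl; intro k _; ring
              _ ≤ Real.log p * (1/(p:ℝ)^2) * 2 := by
                  apply mul_le_mul_of_nonneg_left ?_ (by positivity)
                  · rw [← Finset.Ico_add_one_right_eq_Icc, Finset.sum_Ico_eq_sum_range]
                    have hcg : ∀ i ∈ range (n + 1 - 2), (1/(p:ℝ))^(2+i-2) = (1/(p:ℝ))^i := by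
                      intro i _; congr 1; omega
                    rw [Finset.sum_congr rfl hcg]
                    apply geom_half _ (by positivity) (by
                      rw [div_le_div_iff₀ (by linarith) (by norm_num)]; linarith)
              _ = Real.log p * (2/(p:ℝ)^2) := by ring
          calc ∑ k ∈ Icc 2 n, Real.log p / (p:ℝ)^k ≤ Real.log p * (2 / (p:ℝ)^2) := inner
            _ ≤ (2 * Real.sqrt p) * (2/(p:ℝ)^2) :=
                mul_le_mul_of_nonneg_right (log_le_two_sqrt (by linarith)) (by positivity)
            _ = 4 / ((p:ℝ) * Real.sqrt p) := by
                have hsq : Real.sqrt p * Real.sqrt p = (p:ℝ) :=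
                  Real.mul_self_sqrt (by linarith)
                have hsqpos : (0:ℝ) < Real.sqrt p := Real.sqrt_pos.2 (by linarith)
                field_simp
                nlinarith [hsq]
      _ = 4 * ∑ p ∈ Icc 2 n, (1:ℝ) / ((p:ℝ) * Real.sqrt p) := by
            rw [Finset.mul_sum]; apply Finset.sum_congr rfl; intro p _; ring
      _ ≤ 4 * 2 := by
            have := tele n (by omega)
            have hs : 0 ≤ 2/Real.sqrt n := by positivity
            apply mul_le_mul_of_nonneg_left (by linarith) (by norm_num)
      _ = 8 := by norm_num
  calc ∑ d ∈ (Ioc 0 n).filter (fun d => ¬ d.Prime), Λ d / d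
      ≤ ∑ q ∈ T, Λ (q.1 ^ q.2) / ((q.1 ^ q.2 : ℕ):ℝ) := hsub
    _ ≤ 8 := le_trans hstep2 hstep3


-- log n! = ∑_{d ∈ Ioc 0 n} Λ d * ⌊n/d⌋
lemma log_factorial_eq (n : ℕ) :
    Real.log (n.factorial) = ∑ d ∈ Ioc 0 n, Λ d * ((n / d : ℕ) : ℝ) := by
  classical
  have h1 : Real.log (n.factorial) = ∑ m ∈ Ioc 0 n, Real.log m := by
    have hset : Ioc 0 n = Ico 1 (n+1) := by rw [Finset.Ico_add_one_right_eq_Icc]; ext x; simp only [mem_Ioc, mem_Icc]; omega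
    rw [← Finset.prod_Ico_id_eq_factorial n, hset]
    push_cast
    rw [Real.log_prod]
    intro m hm
    simp only [mem_Ico] at hm
    have : 1 ≤ m := hm.1
    positivity
  rw [h1]
  have h2 : ∀ m ∈ Ioc 0 n, Real.log m = ∑ d ∈ Ioc 0 n, if d ∣ m then Λ d else 0 := by
    intro m hm
    simp only [mem_Ioc] at hm
    rw [← ArithmeticFunction.vonMangoldt_sum (n := m), ← Finset.sum_filter]
    apply Finset.sum_subset
    · intro d hd
      simp only [Nat.mem_divisors] at hd
      simp only [mem_filter, mem_Ioc]
      refine ⟨⟨Nat.pos_of_dvd_of_pos hd.1 (by omega), le_trans (Nat.le_of_dvd (by omega) hd.1) hm.2⟩, hd.1⟩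
    · intro d hd hnd
      exfalso
      apply hnd
      simp only [mem_filter, mem_Ioc] at hd
      simp only [Nat.mem_divisors]
      exact ⟨hd.2, by omega⟩
  rw [Finset.sum_congr rfl h2, Finset.sum_comm]
  apply Finset.sum_congr rfl
  intro d _
  rw [← Finset.sum_filter, Finset.sum_const, Nat.Ioc_filter_dvd_card_eq_div, nsmul_eq_mul, mul_comm]


lemma log_factorial_le (n : ℕ) : Real.log n.factorial ≤ n * Real.log n := by
  calc Real.log n.factorial ≤ Real.log ((n:ℝ)^n) := by
        apply Real.log_le_log (by exact_mod_cast n.factorial_pos)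
        exact_mod_cast Nat.factorial_le_pow n
    _ = n * Real.log n := Real.log_pow n n

lemma log_factorial_ge (n : ℕ) (h : 1 ≤ n) :
    (n:ℝ) * Real.log n - n ≤ Real.log n.factorial := by
  induction n, h using Nat.le_induction with
  | base => simp
  | succ n hn ih =>
    have hn0 : (0:ℝ) < n := by exact_mod_cast hn
    have hfact : ((n+1).factorial : ℝ) = ((n+1:ℕ):ℝ) * (n.factorial : ℝ) := by
      rw [Nat.factorial_succ]; push_cast; ring
    have hlog : Real.log ((n+1).factorial) = Real.log ((n:ℝ)+1) + Real.log (n.factorial) := by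
      rw [hfact, Real.log_mul (by positivity) (Nat.cast_ne_zero.mpr n.factorial_pos.ne')]
      push_cast; ring
    have hkey : (n:ℝ) * (Real.log ((n:ℝ)+1) - Real.log n) ≤ 1 := by
      have hdiv : Real.log ((n:ℝ)+1) - Real.log n = Real.log (((n:ℝ)+1)/n) :=
        (Real.log_div (by positivity) (by positivity)).symm
      have hle : Real.log (((n:ℝ)+1)/n) ≤ ((n:ℝ)+1)/n - 1 :=
        Real.log_le_sub_one_of_pos (by positivity)
      have : ((n:ℝ)+1)/n - 1 = 1/n := by field_simp; ring
      rw [this] at hle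
      rw [hdiv]
      calc (n:ℝ) * Real.log (((n:ℝ)+1)/n) ≤ (n:ℝ) * (1/n) :=
            mul_le_mul_of_nonneg_left hle (by positivity)
        _ = 1 := by field_simp
    rw [hlog]
    push_cast
    nlinarith [ih]

lemma theta_le (n : ℕ) :
    ∑ p ∈ (Ioc 0 n).filter Nat.Prime, Real.log p ≤ n * Real.log 4 := by
  have hset : (Ioc 0 n).filter Nat.Prime = (range (n+1)).filter Nat.Prime := by
    ext p
    simp only [mem_filter, mem_Ioc, mem_range]
    constructor
    · rintro ⟨⟨h1, h2⟩, hp⟩; exact ⟨by omega, hp⟩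
    · rintro ⟨h1, hp⟩; exact ⟨⟨hp.pos, by omega⟩, hp⟩
  rw [hset]
  have hlogprim : Real.log (primorial n) = ∑ p ∈ (range (n+1)).filter Nat.Prime, Real.log p := by
    unfold primorial
    push_cast
    rw [Real.log_prod]
    intro p hp
    simp only [mem_filter] at hp
    exact_mod_cast hp.2.pos.ne'
  rw [← hlogprim]
  calc Real.log (primorial n) ≤ Real.log ((4:ℝ)^n) := by
        apply Real.log_le_log (by exact_mod_cast primorial_pos n)
        exact_mod_cast primorial_le_4_pow n
    _ = n * Real.log 4 := by rw [Real.log_pow]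

lemma nat_div_real_bounds (n d : ℕ) (hd : 0 < d) :
    (n:ℝ)/d - 1 < ((n / d : ℕ) : ℝ) ∧ ((n / d : ℕ) : ℝ) ≤ (n:ℝ)/d := by
  constructor
  · have h1 : n < d * (n / d) + d := by
      have := Nat.div_add_mod n d
      have := Nat.mod_lt n hd
      omega
    have h1' : (n:ℝ) < d * ((n/d : ℕ):ℝ) + d := by exact_mod_cast h1
    have hd' : (0:ℝ) < d := by exact_mod_cast hd
    rw [div_sub_one hd'.ne', div_lt_iff₀ hd']
    nlinarith
  · exact Nat.cast_div_le

lemma mertens_upper (n : ℕ) (hn : 1 ≤ n) :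
    ∑ p ∈ (Ioc 0 n).filter Nat.Prime, Real.log p / p ≤ Real.log n + Real.log 4 := by
  have hn0 : (0:ℝ) < n := by exact_mod_cast hn
  rw [← mul_le_mul_iff_right₀ hn0]
  have hexpand : (n:ℝ) * ∑ p ∈ (Ioc 0 n).filter Nat.Prime, Real.log p / p
      = ∑ p ∈ (Ioc 0 n).filter Nat.Prime, Real.log p * ((n:ℝ)/p) := by
    rw [Finset.mul_sum]; apply Finset.sum_congr rfl; intro p _; ring
  rw [hexpand]
  have hstep : ∑ p ∈ (Ioc 0 n).filter Nat.Prime, Real.log p * ((n:ℝ)/p)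
      ≤ ∑ p ∈ (Ioc 0 n).filter Nat.Prime, (Real.log p * ((n / p : ℕ):ℝ) + Real.log p) := by
    apply Finset.sum_le_sum
    intro p hp
    simp only [mem_filter, mem_Ioc] at hp
    have hlogp : 0 ≤ Real.log p := Real.log_nonneg (by exact_mod_cast hp.2.one_lt.le)
    have hb := (nat_div_real_bounds n p hp.1.1).1
    nlinarith
  rw [Finset.sum_add_distrib] at hstep
  have hprime_le : ∑ p ∈ (Ioc 0 n).filter Nat.Prime, Real.log p * ((n / p : ℕ):ℝ)
      ≤ Real.log n.factorial := by
    rw [log_factorial_eq]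
    have hcongr : ∀ p ∈ (Ioc 0 n).filter Nat.Prime,
        Real.log p * ((n / p : ℕ):ℝ) = Λ p * ((n / p : ℕ):ℝ) := by
      intro p hp
      simp only [mem_filter] at hp
      rw [ArithmeticFunction.vonMangoldt_apply_prime hp.2]
    rw [Finset.sum_congr rfl hcongr]
    apply Finset.sum_le_sum_of_subset_of_nonneg (Finset.filter_subset _ _)
    intro d _ _
    exact mul_nonneg ArithmeticFunction.vonMangoldt_nonneg (Nat.cast_nonneg _)
  calc ∑ p ∈ (Ioc 0 n).filter Nat.Prime, Real.log p * ((n:ℝ)/p)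
      ≤ Real.log n.factorial + n * Real.log 4 := by
        have := theta_le n
        linarith [hstep, hprime_le]
    _ ≤ n * Real.log n + n * Real.log 4 := by linarith [log_factorial_le n]
    _ = n * (Real.log n + Real.log 4) := by ring

lemma mertens_lower (n : ℕ) (hn : 1 ≤ n) :
    Real.log n - 9 ≤ ∑ p ∈ (Ioc 0 n).filter Nat.Prime, Real.log p / p := by
  have hn0 : (0:ℝ) < n := by exact_mod_cast hn
  rw [← mul_le_mul_iff_right₀ hn0]
  have hexpand : (n:ℝ) * ∑ p ∈ (Ioc 0 n).filter Nat.Prime, Real.log p / p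
      = ∑ p ∈ (Ioc 0 n).filter Nat.Prime, Real.log p * ((n:ℝ)/p) := by
    rw [Finset.mul_sum]; apply Finset.sum_congr rfl; intro p _; ring
  rw [hexpand]
  have hstep : ∑ p ∈ (Ioc 0 n).filter Nat.Prime, Λ p * ((n / p : ℕ):ℝ)
      ≤ ∑ p ∈ (Ioc 0 n).filter Nat.Prime, Real.log p * ((n:ℝ)/p) := by
    apply Finset.sum_le_sum
    intro p hp
    simp only [mem_filter, mem_Ioc] at hp
    rw [ArithmeticFunction.vonMangoldt_apply_prime hp.2]
    have hlogp : 0 ≤ Real.log p := Real.log_nonneg (by exact_mod_cast hp.2.one_lt.le)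
    exact mul_le_mul_of_nonneg_left (nat_div_real_bounds n p hp.1.1).2 hlogp
  have hsplit : ∑ p ∈ (Ioc 0 n).filter Nat.Prime, Λ p * ((n / p : ℕ):ℝ)
      = Real.log n.factorial
        - ∑ d ∈ (Ioc 0 n).filter (fun d => ¬ d.Prime), Λ d * ((n / d : ℕ):ℝ) := by
    rw [log_factorial_eq, ← Finset.sum_filter_add_sum_filter_not (Ioc 0 n) Nat.Prime]
    ring
  have hnonprime : ∑ d ∈ (Ioc 0 n).filter (fun d => ¬ d.Prime), Λ d * ((n / d : ℕ):ℝ)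
      ≤ 8 * n := by
    calc ∑ d ∈ (Ioc 0 n).filter (fun d => ¬ d.Prime), Λ d * ((n / d : ℕ):ℝ)
        ≤ ∑ d ∈ (Ioc 0 n).filter (fun d => ¬ d.Prime), (Λ d / d) * n := by
          apply Finset.sum_le_sum
          intro d hd
          simp only [mem_filter, mem_Ioc] at hd
          have h2 := (nat_div_real_bounds n d hd.1.1).2
          have : Λ d / d * (n:ℝ) = Λ d * ((n:ℝ)/d) := by ring
          rw [this]
          exact mul_le_mul_of_nonneg_left h2 ArithmeticFunction.vonMangoldt_nonneg
      _ = (∑ d ∈ (Ioc 0 n).filter (fun d => ¬ d.Prime), Λ d / d) * n := by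
          rw [Finset.sum_mul]
      _ ≤ 8 * n := mul_le_mul_of_nonneg_right (R_bound n) (le_of_lt hn0)
  have hfac := log_factorial_ge n hn
  calc (n:ℝ) * (Real.log n - 9) = ((n:ℝ) * Real.log n - n) - 8 * n := by ring
    _ ≤ Real.log n.factorial - 8 * n := by linarith
    _ ≤ ∑ p ∈ (Ioc 0 n).filter Nat.Prime, Λ p * ((n / p : ℕ):ℝ) := by
        rw [hsplit]; linarith
    _ ≤ ∑ p ∈ (Ioc 0 n).filter Nat.Prime, Real.log p * ((n:ℝ)/p) := hstep

end MertensHelpers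
lemma primesIn_eq_sdiff (X : ℝ) (hX : 3 ≤ X) :
    primesIn X (X^2) = ((Ioc 0 ⌊X^2⌋₊).filter Nat.Prime) \ ((Ioc 0 ⌊X⌋₊).filter Nat.Prime) := by
  classical
  have hX0 : (0:ℝ) ≤ X := by linarith
  have hX20 : (0:ℝ) ≤ X^2 := by positivity
  ext p
  constructor
  · intro h
    simp only [primesIn, mem_filter, mem_range] at h
    obtain ⟨hlt, hp, hXp, hpX2⟩ := h
    have h1 : p ≤ ⌊X^2⌋₊ := Nat.le_floor hpX2
    refine mem_sdiff.mpr ⟨mem_filter.mpr ⟨mem_Ioc.mpr ⟨hp.pos, h1⟩, hp⟩, fun hmem => ?_⟩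
    have h2 : p ≤ ⌊X⌋₊ := (mem_Ioc.mp (mem_filter.mp hmem).1).2
    have : (p:ℝ) ≤ X := le_trans (by exact_mod_cast Nat.cast_le.mpr h2) (Nat.floor_le hX0)
    linarith
  · intro h
    obtain ⟨hmem, hnot⟩ := mem_sdiff.mp h
    have hp : p.Prime := (mem_filter.mp hmem).2
    have h1 : p ≤ ⌊X^2⌋₊ := (mem_Ioc.mp (mem_filter.mp hmem).1).2
    have hpX2 : (p:ℝ) ≤ X^2 := le_trans (Nat.cast_le.mpr h1) (Nat.floor_le hX20)
    have hXp : X < p := by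
      by_contra hc
      push_neg at hc
      exact hnot (mem_filter.mpr ⟨mem_Ioc.mpr ⟨hp.pos, Nat.le_floor hc⟩, hp⟩)
    simp only [primesIn, mem_filter, mem_range]
    exact ⟨by omega, hp, hXp, hpX2⟩

lemma window_bounds (X : ℝ) (hX : Real.exp 30 ≤ X) :
    Real.log X / 2 ≤ ∑ p ∈ primesIn X (X^2), Real.log p / p ∧
      ∑ p ∈ primesIn X (X^2), Real.log p / p ≤ 3 * Real.log X := by
  have hexp : (31:ℝ) ≤ Real.exp 30 := by
    have := Real.add_one_le_exp (30:ℝ)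
    linarith
  have hX3 : (3:ℝ) ≤ X := by linarith
  have hX0 : (0:ℝ) < X := by linarith
  have hL : (30:ℝ) ≤ Real.log X := by
    have := Real.log_le_log (Real.exp_pos 30) hX
    rwa [Real.log_exp] at this
  set L := Real.log X with hLdef
  set n := ⌊X^2⌋₊ with hn
  set m := ⌊X⌋₊ with hm
  have hmn : m ≤ n := Nat.floor_mono (by nlinarith)
  have hm1 : 1 ≤ m := by
    have : (1:ℕ) ≤ ⌊X⌋₊ := Nat.le_floor (by norm_num; linarith)
    exact this
  have hn1 : 1 ≤ n := le_trans hm1 hmn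
  have hm0 : (0:ℝ) < m := by exact_mod_cast hm1
  have hn0 : (0:ℝ) < n := by exact_mod_cast hn1
  have hsub : ((Ioc 0 m).filter Nat.Prime) ⊆ ((Ioc 0 n).filter Nat.Prime) :=
    Finset.filter_subset_filter _ (Finset.Ioc_subset_Ioc le_rfl hmn)
  have hsdiff := primesIn_eq_sdiff X hX3
  have hsum : ∑ p ∈ primesIn X (X^2), Real.log p / p
      = (∑ p ∈ (Ioc 0 n).filter Nat.Prime, Real.log p / p)
        - ∑ p ∈ (Ioc 0 m).filter Nat.Prime, Real.log p / p := by
    rw [hsdiff]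
    exact Finset.sum_sdiff_eq_sub hsub
  -- log n bounds
  have hlogn_ub : Real.log n ≤ 2 * L := by
    have h1 : (n:ℝ) ≤ X^2 := Nat.floor_le (by positivity)
    have := Real.log_le_log hn0 h1
    rwa [Real.log_pow, Nat.cast_ofNat] at this
  have hlogn_lb : 2 * L - Real.log 2 ≤ Real.log n := by
    have h1 : X^2 < (n:ℝ) + 1 := Nat.lt_floor_add_one (X^2)
    have h2 : X^2/2 ≤ (n:ℝ) := by nlinarith
    have h3 := Real.log_le_log (by positivity) h2
    rw [Real.log_div (by positivity) (by norm_num), Real.log_pow, Nat.cast_ofNat] at h3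
    linarith
  have hlogm_ub : Real.log m ≤ L := by
    have h1 : (m:ℝ) ≤ X := Nat.floor_le (by positivity)
    exact Real.log_le_log hm0 h1
  have hlog2 : Real.log 2 ≤ 1 := by
    have := Real.log_le_sub_one_of_pos (show (0:ℝ) < 2 by norm_num); linarith
  have hlog4 : Real.log 4 ≤ 3 := by
    have := Real.log_le_sub_one_of_pos (show (0:ℝ) < 4 by norm_num); linarith
  have hmu := mertens_upper n hn1
  have hml := mertens_lower n hn1
  have hmu' := mertens_upper m hm1
  have hml' := mertens_lower m hm1
  have hSm_nonneg : 0 ≤ ∑ p ∈ (Ioc 0 m).filter Nat.Prime, Real.log p / p := by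
    apply Finset.sum_nonneg
    intro p hp
    simp only [mem_filter, mem_Ioc] at hp
    have : (1:ℝ) ≤ p := by exact_mod_cast hp.2.one_lt.le
    have := Real.log_nonneg this
    positivity
  constructor
  · rw [hsum]
    have : Real.log n - 9 - (Real.log m + Real.log 4) ≤ _ - _ := sub_le_sub hml hmu'
    have hcalc : L / 2 ≤ Real.log n - 9 - (Real.log m + Real.log 4) := by
      linarith
    linarith
  · rw [hsum]
    have : (∑ p ∈ (Ioc 0 n).filter Nat.Prime, Real.log p / p) ≤ Real.log n + Real.log 4 := hmu
    linarith

-- step A: variance formula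
lemma varianceF
    {Ω : Type*} [MeasurableSpace Ω]
    (P : Measure Ω) [IsProbabilityMeasure P] (a : ℕ → Ω → ℝ)
    (hL2 : ∀ p : ℕ, p.Prime → MemLp (a p) 2 P)
    (hindep : iIndepFun (fun p : {p : ℕ // p.Prime} => a p.1) P)
    (s : Finset ℕ) (hs : ∀ p ∈ s, p.Prime) (c : ℕ → ℝ) :
    variance (fun ω => ∑ p ∈ s, c p * a p ω) P
      = ∑ p ∈ s, (c p)^2 * variance (a p) P := by
  classical
  have hfun : (fun ω => ∑ p ∈ s, c p * a p ω) = ∑ p ∈ s, (fun ω => c p * a p ω) := by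
    funext ω; rw [Finset.sum_apply]
  rw [hfun]
  rw [ProbabilityTheory.IndepFun.variance_sum
    (fun p hp => (hL2 p (hs p hp)).const_mul (c p))
    (by
      intro p hp q hq hne
      have hp' : p.Prime := hs p (by exact_mod_cast hp)
      have hq' : q.Prime := hs q (by exact_mod_cast hq)
      have hbase : IndepFun (a p) (a q) P :=
        hindep.indepFun (i := ⟨p, hp'⟩) (j := ⟨q, hq'⟩)
          (fun h => hne (congrArg Subtype.val h))
      exact hbase.comp (measurable_id.const_mul (c p)) (measurable_id.const_mul (c q)))]
  apply Finset.sum_congr rfl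
  intro p _
  exact variance_const_mul (c p) (a p) P

/-- Under the independence and variance hypotheses on `(a_p)`, there exist constants `d₁, d₂ > 0` and `X₀` such that for every real `X ≥ X₀`, the random variable `(1/log X)·∑_{X < p ≤ X²} a_p·(log p)/p` has variance between `d₁` and `d₂`. -/
theorem variance_square_range_weighted
    {Ω : Type*} [MeasurableSpace Ω]
    (P : Measure Ω) [IsProbabilityMeasure P] (a : ℕ → Ω → ℝ)
    (hmeas : ∀ p : ℕ, p.Prime → Measurable (a p))
    (hL2 : ∀ p : ℕ, p.Prime → MemLp (a p) 2 P)
    (hindep : iIndepFun (fun p : {p : ℕ // p.Prime} => a p.1) P)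
    (c₁ c₂ : ℝ) (hc₁ : 0 < c₁) (hc₂ : 0 < c₂)
    (hvar : ∀ p : ℕ, p.Prime →
      c₁ * p ≤ variance (a p) P ∧ variance (a p) P ≤ c₂ * p) :
    ∃ d₁ d₂ : ℝ, 0 < d₁ ∧ 0 < d₂ ∧ ∃ X₀ : ℝ, ∀ X : ℝ, X₀ ≤ X →
      d₁ ≤ variance (fun ω => (Real.log X)⁻¹ * ∑ p ∈ primesIn X (X ^ 2), a p ω * Real.log p / p) P ∧
        variance (fun ω => (Real.log X)⁻¹ * ∑ p ∈ primesIn X (X ^ 2), a p ω * Real.log p / p) P ≤ d₂ := by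
  classical
  refine ⟨c₁/2, 6*c₂, by positivity, by positivity, Real.exp 30, fun X hX => ?_⟩
  have hexp : (31:ℝ) ≤ Real.exp 30 := by
    have := Real.add_one_le_exp (30:ℝ); linarith
  have hX0 : (0:ℝ) < X := by linarith
  have hL : (30:ℝ) ≤ Real.log X := by
    have := Real.log_le_log (Real.exp_pos 30) hX
    rwa [Real.log_exp] at this
  set L := Real.log X with hLdef
  have hL0 : (0:ℝ) < L := by linarith
  set s := primesIn X (X^2) with hs_def
  have hs : ∀ p ∈ s, p.Prime := by
    intro p hp
    simp only [hs_def, primesIn, mem_filter] at hp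
    exact hp.2.1
  -- rewrite the inner sum
  have hfeq : (fun ω => (Real.log X)⁻¹ * ∑ p ∈ primesIn X (X ^ 2), a p ω * Real.log p / p)
      = (fun ω => L⁻¹ * ∑ p ∈ s, (Real.log p / p) * a p ω) := by
    funext ω
    congr 1
    apply Finset.sum_congr rfl
    intro p _
    ring
  rw [hfeq, variance_const_mul]
  rw [varianceF P a hL2 hindep s hs (fun p => Real.log p / p)]
  set V := ∑ p ∈ s, (Real.log p / p)^2 * variance (a p) P with hV
  set W := ∑ p ∈ s, (Real.log p)^2 / p with hW
  -- facts about members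
  have hmem : ∀ p ∈ s, X < (p:ℝ) ∧ (p:ℝ) ≤ X^2 := by
    intro p hp
    simp only [hs_def, primesIn, mem_filter] at hp
    exact ⟨hp.2.2.1, hp.2.2.2⟩
  have hlogp_bounds : ∀ p ∈ s, L ≤ Real.log p ∧ Real.log p ≤ 2*L := by
    intro p hp
    obtain ⟨h1, h2⟩ := hmem p hp
    have hp0 : (0:ℝ) < p := by linarith
    constructor
    · exact Real.log_le_log hX0 (le_of_lt h1)
    · have := Real.log_le_log hp0 h2
      rwa [Real.log_pow, Nat.cast_ofNat] at this
  -- V between c₁ W and c₂ W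
  have hVW_lb : c₁ * W ≤ V := by
    rw [hV, hW, Finset.mul_sum]
    apply Finset.sum_le_sum
    intro p hp
    have hp' := hs p hp
    have hp0 : (0:ℝ) < p := by exact_mod_cast hp'.pos
    have hvp := (hvar p hp').1
    have hkey : (Real.log p / p)^2 * (c₁ * p) = c₁ * ((Real.log p)^2 / p) := by
      field_simp
    calc c₁ * ((Real.log p)^2 / p) = (Real.log p / p)^2 * (c₁ * p) := hkey.symm
      _ ≤ (Real.log p / p)^2 * variance (a p) P :=
          mul_le_mul_of_nonneg_left hvp (by positivity)
  have hVW_ub : V ≤ c₂ * W := by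
    rw [hV, hW, Finset.mul_sum]
    apply Finset.sum_le_sum
    intro p hp
    have hp' := hs p hp
    have hp0 : (0:ℝ) < p := by exact_mod_cast hp'.pos
    have hvp := (hvar p hp').2
    have hkey : (Real.log p / p)^2 * (c₂ * p) = c₂ * ((Real.log p)^2 / p) := by
      field_simp
    calc (Real.log p / p)^2 * variance (a p) P ≤ (Real.log p / p)^2 * (c₂ * p) :=
          mul_le_mul_of_nonneg_left hvp (by positivity)
      _ = c₂ * ((Real.log p)^2 / p) := hkey
  -- W between L²/2 and 6L²
  obtain ⟨hwin_lb, hwin_ub⟩ := window_bounds X hX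
  have hW_lb : L^2/2 ≤ W := by
    have hterm : ∀ p ∈ s, L * (Real.log p / p) ≤ (Real.log p)^2 / p := by
      intro p hp
      have hp0 : (0:ℝ) < p := by exact_mod_cast (hs p hp).pos
      have hlb := (hlogp_bounds p hp).1
      have : L * Real.log p ≤ (Real.log p)^2 := by nlinarith
      calc L * (Real.log p / p) = L * Real.log p / p := by ring
        _ ≤ (Real.log p)^2 / p := div_le_div_of_nonneg_right this hp0.le |>.trans_eq rfl
    calc L^2/2 = L * (L/2) := by ring
      _ ≤ L * ∑ p ∈ s, Real.log p / p := mul_le_mul_of_nonneg_left hwin_lb (le_of_lt hL0)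
      _ = ∑ p ∈ s, L * (Real.log p / p) := by rw [Finset.mul_sum]
      _ ≤ W := Finset.sum_le_sum hterm
  have hW_ub : W ≤ 6 * L^2 := by
    have hterm : ∀ p ∈ s, (Real.log p)^2 / p ≤ 2*L * (Real.log p / p) := by
      intro p hp
      have hp0 : (0:ℝ) < p := by exact_mod_cast (hs p hp).pos
      have hlb := (hlogp_bounds p hp).1
      have hub := (hlogp_bounds p hp).2
      have hlogp0 : 0 ≤ Real.log p := le_trans (le_of_lt hL0) hlb
      have h2 : (Real.log p)^2 ≤ 2*L * Real.log p := by nlinarith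
      calc (Real.log p)^2 / p ≤ (2*L * Real.log p) / p := div_le_div_of_nonneg_right h2 hp0.le
        _ = 2*L * (Real.log p / p) := by ring
    calc W ≤ ∑ p ∈ s, 2*L * (Real.log p / p) := Finset.sum_le_sum hterm
      _ = 2*L * ∑ p ∈ s, Real.log p / p := by rw [Finset.mul_sum]
      _ ≤ 2*L * (3*L) := mul_le_mul_of_nonneg_left hwin_ub (by positivity)
      _ = 6 * L^2 := by ring
  -- conclude
  have hV_lb : c₁ * (L^2/2) ≤ V := le_trans (by nlinarith) hVW_lb
  have hV_ub : V ≤ c₂ * (6*L^2) := le_trans hVW_ub (by nlinarith)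
  have hL2ne : (L:ℝ) ≠ 0 := ne_of_gt hL0
  constructor
  · have : (L⁻¹)^2 * (c₁ * (L^2/2)) ≤ (L⁻¹)^2 * V :=
      mul_le_mul_of_nonneg_left hV_lb (by positivity)
    have heq : (L⁻¹)^2 * (c₁ * (L^2/2)) = c₁/2 := by field_simp
    linarith [heq ▸ this]
  · have : (L⁻¹)^2 * V ≤ (L⁻¹)^2 * (c₂ * (6*L^2)) :=
      mul_le_mul_of_nonneg_left hV_ub (by positivity)
    have heq : (L⁻¹)^2 * (c₂ * (6*L^2)) = 6*c₂ := by field_simp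
    linarith [heq ▸ this]
end
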